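/- Let a > 0, c > 0, μ > 0, and σ < −μ, and define q(δ) = −aμ − 1 − cσδ − ln(cδ(μ−σ)) for δ > 0. Then there exists a unique δ* ∈ (0, 1/(c(μ−σ))) with q(δ*) = 0. Moreover, if δ* < a/c, then for any δ ∈ (δ*, a/c) and any continuous φ : (−∞,0] → ℝ with φ(0) = δ, φ(t) = −δ for all t ≤ q(δ)/μ, and φ(t) ∈ (−δ, δ) for t ∈ (q(δ)/μ, 0), the function u defined by u(t) = φ(t) for t ≤ 0 and u(t) = σδ/μ + δ e^{μt}(μ−σ)/μ for t ≥ 0 is a solution of the model DDE, it satisfies t − a − c u(t) ≤ q(δ)/μ for all t ≥ 0, and u(t) → ∞ as t → ∞. Consequently δ* is an upper bound on the radius of the largest sup-norm ball contained in the basin of attraction of the zero solution. -/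

import Mathlib

/-- A solution of the model state-dependent DDE
`u'(t) = μ u(t) + σ u(t - a - c u(t))` for `t ≥ 0`, with initial function `φ` on `(-∞,0]`. -/
def IsModelSolution (μ σ c a : ℝ) (φ u : ℝ → ℝ) : Prop :=
  Continuous u ∧ (∀ t ≤ (0 : ℝ), u t = φ t) ∧
    ∀ t, (0 : ℝ) ≤ t →
      HasDerivWithinAt u (μ * u t + σ * u (t - a - c * u t)) (Set.Ici (0 : ℝ)) t

/-- The function `q(δ) = -aμ - 1 - cσδ - ln(cδ(μ-σ))` of Example 6.2. -/
noncomputable def qfun (μ σ c a δ : ℝ) : ℝ :=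
  -a * μ - 1 - c * σ * δ - Real.log (c * δ * (μ - σ))

/-- strict antitonicity of `q` on `(0, 1/(c(μ-σ)))`. -/
lemma qfun_anti (μ σ c a : ℝ) (hc : 0 < c) (hμ : 0 < μ) (hσ : σ < -μ)
    {x y : ℝ} (hx : 0 < x) (hxy : x < y) (hyR : y < 1 / (c * (μ - σ))) :
    qfun μ σ c a y < qfun μ σ c a x := by
  have hμσ : 0 < μ - σ := by linarith
  have hK : 0 < c * (μ - σ) := by positivity
  have hy : 0 < y := hx.trans hxy
  have hyc : c * (μ - σ) * y < 1 := by
    have := (lt_div_iff₀ hK).mp hyR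
    linarith
  have hlog : Real.log (x / y) < x / y - 1 :=
    Real.log_lt_sub_one_of_pos (by positivity) (ne_of_lt ((div_lt_one hy).mpr hxy))
  have hlogdiff : Real.log (c * x * (μ - σ)) - Real.log (c * y * (μ - σ))
      = Real.log (x / y) := by
    rw [← Real.log_div (by positivity) (by positivity)]
    congr 1
    field_simp
  have hlog2 : Real.log (x / y) * y < x - y := by
    have h := mul_lt_mul_of_pos_right hlog hy
    rw [sub_mul, one_mul, div_mul_cancel₀ _ hy.ne'] at h
    exact h
  unfold qfun
  have hgoal : Real.log (c * x * (μ - σ)) - Real.log (c * y * (μ - σ)) < c * σ * (y - x) := by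
    rw [hlogdiff]
    rw [show c * σ * (y - x) = (c * σ * (y - x) * y) / y by field_simp]
    rw [lt_div_iff₀ hy]
    nlinarith [mul_pos (sub_pos.mpr hxy) hy, mul_pos (mul_pos hc hμ) hy]
  linarith

lemma qfun_exists_root (μ σ c a : ℝ) (ha : 0 < a) (hc : 0 < c) (hμ : 0 < μ) (hσ : σ < -μ) :
    ∃ δstar ∈ Set.Ioo (0:ℝ) (1 / (c * (μ - σ))), qfun μ σ c a δstar = 0 := by
  have hμσ : 0 < μ - σ := by linarith
  have hK : 0 < c * (μ - σ) := by positivity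
  set R : ℝ := 1 / (c * (μ - σ)) with hRdef
  have hR : 0 < R := by positivity
  set δ₀ : ℝ := min (R / 2) (Real.exp (-a * μ - 1) / (2 * (c * (μ - σ)))) with hδ₀def
  have hδ₀pos : 0 < δ₀ := lt_min (by positivity) (by positivity)
  have hδ₀lt : δ₀ < R := (min_le_left _ _).trans_lt (by linarith)
  -- q δ₀ > 0
  have hlogδ₀ : Real.log (c * δ₀ * (μ - σ)) < -a * μ - 1 := by
    have h1 : c * δ₀ * (μ - σ) ≤ Real.exp (-a * μ - 1) / 2 := by
      have := min_le_right (R / 2) (Real.exp (-a * μ - 1) / (2 * (c * (μ - σ))))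
      calc c * δ₀ * (μ - σ) ≤ c * (Real.exp (-a * μ - 1) / (2 * (c * (μ - σ)))) * (μ - σ) := by
            apply mul_le_mul_of_nonneg_right (mul_le_mul_of_nonneg_left this hc.le) hμσ.le
        _ = Real.exp (-a * μ - 1) / 2 := by field_simp
    have h2 : Real.log (c * δ₀ * (μ - σ)) ≤ Real.log (Real.exp (-a * μ - 1) / 2) :=
      Real.log_le_log (by positivity) h1
    have h3 : Real.log (Real.exp (-a * μ - 1) / 2) = (-a * μ - 1) - Real.log 2 := by
      rw [Real.log_div (Real.exp_ne_zero _) (by norm_num), Real.log_exp]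
    have h4 : (0:ℝ) < Real.log 2 := Real.log_pos (by norm_num)
    linarith
  have hqδ₀ : 0 < qfun μ σ c a δ₀ := by
    unfold qfun
    nlinarith [mul_pos (mul_pos hc hμ) hδ₀pos, mul_pos hc hδ₀pos]
  -- q R < 0
  have hcR : c * R * (μ - σ) = 1 := by rw [hRdef]; field_simp
  have hqR : qfun μ σ c a R < 0 := by
    unfold qfun
    rw [hcR, Real.log_one]
    have hcσR : c * σ * R * (μ - σ) = σ := by nlinarith [hcR]
    have : c * σ * R = σ / (μ - σ) := by
      field_simp
      linarith [hcσR]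
    rw [this]
    rw [show -a * μ - 1 - σ / (μ - σ) - 0 = -a * μ - μ / (μ - σ) by field_simp; ring]
    have : 0 < μ / (μ - σ) := by positivity
    nlinarith
  -- continuity of q on [δ₀, R]
  have hcont : ContinuousOn (qfun μ σ c a) (Set.Icc δ₀ R) := by
    unfold qfun
    apply ContinuousOn.sub
    · fun_prop
    · apply ContinuousOn.log
      · fun_prop
      · intro x hx
        have : 0 < x := hδ₀pos.trans_le hx.1
        positivity
  have := intermediate_value_Ioo' hδ₀lt.le hcont
  have h0mem : (0:ℝ) ∈ Set.Ioo (qfun μ σ c a R) (qfun μ σ c a δ₀) := ⟨hqR, hqδ₀⟩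
  obtain ⟨δstar, hmem, hq0⟩ := this h0mem
  exact ⟨δstar, ⟨hδ₀pos.trans hmem.1, hmem.2⟩, hq0⟩

/-- Example 6.2 of Humphries–Magpantay, `μ > 0`: existence and
uniqueness of the root `δ*` of `q`, and for every `δ ∈ (δ*, a/c)` an explicit unbounded
solution, so `δ*` bounds the radius of the largest ball in the basin of attraction. -/
theorem stmt_19 (μ σ c a : ℝ) (ha : 0 < a) (hc : 0 < c) (hμ : 0 < μ) (hσ : σ < -μ) :
    (∃! δstar : ℝ, δstar ∈ Set.Ioo 0 (1 / (c * (μ - σ))) ∧ qfun μ σ c a δstar = 0) ∧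
    (∀ δstar ∈ Set.Ioo (0 : ℝ) (1 / (c * (μ - σ))), qfun μ σ c a δstar = 0 →
      δstar < a / c →
      ∀ δ ∈ Set.Ioo δstar (a / c),
        ∀ φ : ℝ → ℝ, ContinuousOn φ (Set.Iic 0) →
          φ 0 = δ →
          (∀ t ≤ qfun μ σ c a δ / μ, φ t = -δ) →
          (∀ t ∈ Set.Ioo (qfun μ σ c a δ / μ) 0, φ t ∈ Set.Ioo (-δ) δ) →
          ∀ u : ℝ → ℝ,
            (∀ t, u t = if t ≤ 0 then φ t
              else σ * δ / μ + δ * Real.exp (μ * t) * (μ - σ) / μ) →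
            IsModelSolution μ σ c a φ u ∧
            (∀ t ≥ (0 : ℝ), t - a - c * u t ≤ qfun μ σ c a δ / μ) ∧
            Filter.Tendsto u Filter.atTop Filter.atTop ∧
            ¬ Filter.Tendsto u Filter.atTop (nhds 0)) := by
  have hμσ : 0 < μ - σ := by linarith
  constructor
  · -- existence and uniqueness
    obtain ⟨δstar, hmem, hq0⟩ := qfun_exists_root μ σ c a ha hc hμ hσ
    refine ⟨δstar, ⟨hmem, hq0⟩, ?_⟩
    rintro y ⟨hy, hqy⟩
    rcases lt_trichotomy y δstar with h | h | h
    · exfalso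
      have := qfun_anti μ σ c a hc hμ hσ hy.1 h hmem.2
      rw [hq0, hqy] at this; exact lt_irrefl 0 this
    · exact h
    · exfalso
      have := qfun_anti μ σ c a hc hμ hσ hmem.1 h hy.2
      rw [hq0, hqy] at this; exact lt_irrefl 0 this
  · rintro δstar hδstar hqstar hstar_lt δ hδ φ hφcont hφ0 hφneg hφmid u hu
    have hδpos : 0 < δ := hδstar.1.trans hδ.1
    have hK : 0 < c * δ * (μ - σ) := by positivity
    set Q : ℝ := qfun μ σ c a δ with hQdef
    -- Q/μ < 0
    have hQμ : Q / μ < 0 := by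
      by_contra h
      push_neg at h
      have h0 := hφneg 0 h
      rw [hφ0] at h0
      linarith
    -- u agrees with explicit formula on [0,∞)
    have hu_neg : ∀ t ≤ (0:ℝ), u t = φ t := fun t ht => by rw [hu t, if_pos ht]
    have hu_pos : ∀ t, 0 ≤ t → u t = σ * δ / μ + δ * Real.exp (μ * t) * (μ - σ) / μ := by
      intro t ht
      rcases eq_or_lt_of_le ht with h | h
      · rw [← h, hu 0, if_pos le_rfl, hφ0, mul_zero, Real.exp_zero]
        field_simp
        ring
      · rw [hu t, if_neg (not_le.mpr h)]
    -- key inequality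
    have hkey : ∀ t : ℝ,
        t - a - c * (σ * δ / μ + δ * Real.exp (μ * t) * (μ - σ) / μ) ≤ Q / μ := by
      intro t
      rw [le_div_iff₀ hμ]
      have h1 := Real.add_one_le_exp (μ * t + Real.log (c * δ * (μ - σ)))
      rw [Real.exp_add, Real.exp_log hK] at h1
      have hexpand : (t - a - c * (σ * δ / μ + δ * Real.exp (μ * t) * (μ - σ) / μ)) * μ
          = μ * t - a * μ - c * σ * δ - c * δ * (μ - σ) * Real.exp (μ * t) := by
        field_simp; ring
      rw [hexpand, hQdef]
      unfold qfun
      nlinarith [h1]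
    have hdelay : ∀ t ≥ (0:ℝ), t - a - c * u t ≤ Q / μ := by
      intro t ht
      rw [hu_pos t ht]
      exact hkey t
    have hu_delayed : ∀ t ≥ (0:ℝ), u (t - a - c * u t) = -δ := by
      intro t ht
      have h1 := hdelay t ht
      rw [hu_neg _ (h1.trans hQμ.le)]
      exact hφneg _ h1
    have hf_cont : Continuous (fun t => σ * δ / μ + δ * Real.exp (μ * t) * (μ - σ) / μ) := by
      fun_prop
    refine ⟨⟨?_, hu_neg, ?_⟩, hdelay, ?_, ?_⟩
    · -- continuity of u
      rw [continuous_iff_continuousAt]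
      intro t
      rcases lt_trichotomy t 0 with h | h | h
      · have h1 : ContinuousAt φ t :=
          (hφcont t h.le).continuousAt (Iic_mem_nhds h)
        apply h1.congr
        exact Filter.eventuallyEq_of_mem (Iic_mem_nhds h) (fun s hs => (hu_neg s hs).symm)
      · subst h
        have h1 : ContinuousWithinAt u (Set.Iic 0) 0 :=
          (hφcont 0 Set.self_mem_Iic).congr hu_neg (hu_neg 0 le_rfl)
        have h2 : ContinuousWithinAt u (Set.Ici 0) 0 :=
          (hf_cont.continuousWithinAt).congr (fun y hy => hu_pos y hy) (hu_pos 0 le_rfl)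
        have h3 := h1.union h2
        rwa [Set.Iic_union_Ici, continuousWithinAt_univ] at h3
      · have h1 : ContinuousAt u t := by
          apply hf_cont.continuousAt.congr
          exact Filter.eventuallyEq_of_mem (Ici_mem_nhds h) (fun s hs => (hu_pos s hs).symm)
        exact h1
    · -- derivative
      intro t ht
      have h1 : HasDerivAt (fun s : ℝ => μ * s) μ t := by
        simpa using (hasDerivAt_id t).const_mul μ
      have h2 := ((h1.exp.const_mul δ).mul_const (μ - σ)).div_const μ
      have h3 := h2.const_add (σ * δ / μ)
      have hval : μ * u t + σ * u (t - a - c * u t)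
          = δ * (Real.exp (μ * t) * μ) * (μ - σ) / μ := by
        rw [hu_delayed t ht, hu_pos t ht]
        field_simp; ring
      rw [hval]
      exact (h3.hasDerivWithinAt).congr (fun y hy => hu_pos y hy) (hu_pos t ht)
    · -- tendsto atTop
      have hEtop : Filter.Tendsto (fun t => Real.exp (μ * t)) Filter.atTop Filter.atTop :=
        Real.tendsto_exp_atTop.comp (Filter.Tendsto.const_mul_atTop hμ Filter.tendsto_id)
      have hco : 0 < δ * (μ - σ) / μ := by positivity
      have hftop : Filter.Tendsto (fun t => σ * δ / μ + δ * Real.exp (μ * t) * (μ - σ) / μ)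
          Filter.atTop Filter.atTop := by
        apply Filter.tendsto_atTop_add_const_left
        apply Filter.Tendsto.congr _ (Filter.Tendsto.const_mul_atTop hco hEtop)
        intro x; ring
      apply hftop.congr'
      filter_upwards [Filter.eventually_ge_atTop (0:ℝ)] with t ht
      exact (hu_pos t ht).symm
    · -- not tendsto nhds 0
      intro hcon
      have hEtop : Filter.Tendsto (fun t => Real.exp (μ * t)) Filter.atTop Filter.atTop :=
        Real.tendsto_exp_atTop.comp (Filter.Tendsto.const_mul_atTop hμ Filter.tendsto_id)
      have hco : 0 < δ * (μ - σ) / μ := by positivity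
      have hftop : Filter.Tendsto (fun t => σ * δ / μ + δ * Real.exp (μ * t) * (μ - σ) / μ)
          Filter.atTop Filter.atTop := by
        apply Filter.tendsto_atTop_add_const_left
        apply Filter.Tendsto.congr _ (Filter.Tendsto.const_mul_atTop hco hEtop)
        intro x; ring
      have hutop : Filter.Tendsto u Filter.atTop Filter.atTop := by
        apply hftop.congr'
        filter_upwards [Filter.eventually_ge_atTop (0:ℝ)] with t ht
        exact (hu_pos t ht).symm
      exact not_tendsto_nhds_of_tendsto_atTop hutop 0 hcon
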